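/- (Arithmetic content of Corollary 1.) Let κ𝒞 ≥ 0, γ ≥ 1, ρ > 0, B > 0, ν > 0, Z a positive integer, and E a positive integer, and suppose ν(γ + 1) > 2κ𝒞. Set η_θ = ν/(2ρ²B) and let T be a real number with T ≥ (1/(ν(γ+1) − 2κ𝒞)) · (4ρ²B² log(Z+1)(γ+1)/(νE) + 2κ𝒞(γ−1)) and T ≥ 1. Then (κ𝒞/T)·(log(γ + T − 1) + 1 − log(γ + 1)) + B log(Z + 1)/(η_θ E T) + η_θ ρ² B ≤ ν. -/

import Mathlib

/-- Arithmetic content of Corollary 1: with the step size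
`η_θ = ν/(2ρ²B)` and `T` at least
`(4ρ²B² log(Z+1)(γ+1)/(νE) + 2κ𝒞(γ−1)) / (ν(γ+1) − 2κ𝒞)`, the duality-gap
bound `(κ𝒞/T)(log(γ+T−1)+1−log(γ+1)) + B log(Z+1)/(η_θ E T) + η_θ ρ² B`
is at most `ν`. -/
theorem stmt_8 {κC γ ρ B ν : ℝ} (hκC : 0 ≤ κC) (hγ : 1 ≤ γ)
    (hρ : 0 < ρ) (hB : 0 < B) (hν : 0 < ν)
    {Z E : ℕ} (hZ : 0 < Z) (hE : 0 < E)
    (hslack : 2 * κC < ν * (γ + 1))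
    (ηθ : ℝ) (hηθ : ηθ = ν / (2 * ρ ^ 2 * B))
    (T : ℝ) (hT1 : 1 ≤ T)
    (hT : T ≥ (1 / (ν * (γ + 1) - 2 * κC)) *
      (4 * ρ ^ 2 * B ^ 2 * Real.log (Z + 1) * (γ + 1) / (ν * E) +
        2 * κC * (γ - 1))) :
    κC / T * (Real.log (γ + T - 1) + 1 - Real.log (γ + 1)) +
      B * Real.log (Z + 1) / (ηθ * E * T) + ηθ * ρ ^ 2 * B ≤ ν := by
  subst hηθ
  set L := Real.log ((Z : ℝ) + 1) with hLdef
  have hZ0 : (0 : ℝ) ≤ Z := Nat.cast_nonneg Z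
  have hL : 0 ≤ L := Real.log_nonneg (by linarith)
  have hγ1 : (0 : ℝ) < γ + 1 := by linarith
  have hT0 : (0 : ℝ) < T := by linarith
  have hE0 : (0 : ℝ) < (E : ℝ) := by exact_mod_cast hE
  have hslack' : 0 < ν * (γ + 1) - 2 * κC := by linarith
  -- log bound
  have hpos : 0 < (γ + T - 1) / (γ + 1) := by
    apply div_pos <;> linarith
  have h1 := Real.log_le_sub_one_of_pos hpos
  rw [Real.log_div (by linarith) (by linarith)] at h1
  have hX : Real.log (γ + T - 1) + 1 - Real.log (γ + 1) ≤ (γ + T - 1) / (γ + 1) := by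
    linarith
  have hfrac : 0 ≤ κC / T := by positivity
  have hstep1 : κC / T * (Real.log (γ + T - 1) + 1 - Real.log (γ + 1)) ≤
      κC * (γ + T - 1) / (T * (γ + 1)) := by
    calc κC / T * (Real.log (γ + T - 1) + 1 - Real.log (γ + 1))
        ≤ κC / T * ((γ + T - 1) / (γ + 1)) := mul_le_mul_of_nonneg_left hX hfrac
      _ = κC * (γ + T - 1) / (T * (γ + 1)) := by rw [div_mul_div_comm]
  -- rewrite the other two terms
  have h2 : B * L / (ν / (2 * ρ ^ 2 * B) * E * T) = 2 * ρ ^ 2 * B ^ 2 * L / (ν * E * T) := by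
    field_simp
  have h3 : ν / (2 * ρ ^ 2 * B) * ρ ^ 2 * B = ν / 2 := by
    field_simp
  rw [h2, h3]
  -- turn hT into a polynomial inequality
  have hT' : 4 * ρ ^ 2 * B ^ 2 * L * (γ + 1) / (ν * E) + 2 * κC * (γ - 1) ≤
      T * (ν * (γ + 1) - 2 * κC) := by
    rw [ge_iff_le, one_div, inv_mul_eq_div, div_le_iff₀ hslack'] at hT
    linarith
  have hT'' : 4 * ρ ^ 2 * B ^ 2 * L * (γ + 1) + 2 * κC * (γ - 1) * (ν * E) ≤
      T * (ν * (γ + 1) - 2 * κC) * (ν * E) := by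
    have h := mul_le_mul_of_nonneg_right hT' (le_of_lt (by positivity : (0:ℝ) < ν * E))
    rw [add_mul, div_mul_cancel₀ _ (by positivity : (ν * E : ℝ) ≠ 0)] at h
    linarith
  -- final inequality
  have hkey : κC * (γ + T - 1) / (T * (γ + 1)) + 2 * ρ ^ 2 * B ^ 2 * L / (ν * E * T) ≤ ν / 2 := by
    rw [div_add_div _ _ (by positivity) (by positivity), div_le_div_iff₀ (by positivity) (by norm_num)]
    linarith [mul_le_mul_of_nonneg_right hT'' hT0.le]
  linarith
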